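/- (Logarithmic quantile tail bound.) Let h be a probability density on ℝ whose support {h > 0} is an interval, let H be its distribution function, and suppose there exists ω > 0 such that h(x) ≥ ω · min(H(x), 1−H(x)) for all x ∈ ℝ. Then for every η ∈ (0, 1/2): H⁻¹(1−η) ≤ H⁻¹(1/2) + ω⁻¹ · log(1/(2η)) and H⁻¹(η) ≥ H⁻¹(1/2) − ω⁻¹ · log(1/(2η)). -/

import Mathlib

open MeasureTheory

noncomputable section

/-- `f` is a probability density on `ℝ`. -/
def IsProbDensity (f : ℝ → ℝ) : Prop :=
  (∀ x, 0 ≤ f x) ∧ Integrable f ∧ ∫ x, f x = 1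

/-- The distribution function of a density `f`: `F(x) = ∫_{−∞}^x f`. -/
def cdfOf (f : ℝ → ℝ) (x : ℝ) : ℝ := ∫ t in Set.Iic x, f t

/-- The quantile function `F⁻¹(t) = inf {x : F(x) ≥ t}`. -/
def quantile (F : ℝ → ℝ) (t : ℝ) : ℝ := sInf {x | t ≤ F x}

section QuantileAux

open Set Filter

variable {h : ℝ → ℝ} {w : ℝ}

lemma cdf_diff (hh : IsProbDensity h) {x y : ℝ} (hxy : x ≤ y) :
    cdfOf h y - cdfOf h x = ∫ t in Set.Ioc x y, h t := by
  rw [cdfOf, cdfOf, intervalIntegral.integral_Iic_sub_Iic hh.2.1.integrableOn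
    hh.2.1.integrableOn, intervalIntegral.integral_of_le hxy]

lemma cdf_mono (hh : IsProbDensity h) : Monotone (cdfOf h) := by
  intro x y hxy
  have := cdf_diff hh hxy
  have h0 : 0 ≤ ∫ t in Set.Ioc x y, h t :=
    setIntegral_nonneg measurableSet_Ioc fun t _ => hh.1 t
  linarith

lemma integral_const_le (hh : IsProbDensity h) {x y : ℝ} (hxy : x ≤ y) {c : ℝ}
    (hc : ∀ t ∈ Set.Ioc x y, c ≤ h t) :
    c * (y - x) ≤ ∫ t in Set.Ioc x y, h t := by
  have := setIntegral_mono_on (f := fun _ => c) (g := h) (s := Set.Ioc x y)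
    (by simp) hh.2.1.integrableOn measurableSet_Ioc hc
  rwa [setIntegral_const, measureReal_def, Real.volume_Ioc, smul_eq_mul,
    ENNReal.toReal_ofReal (by linarith), mul_comm] at this

lemma step_up (hh : IsProbDensity h) (hw : 0 < w)
    (hlow : ∀ x : ℝ, w * min (cdfOf h x) (1 - cdfOf h x) ≤ h x)
    {a x y : ℝ} (half : 1/2 ≤ cdfOf h a) (hax : a ≤ x) (hxy : x ≤ y) :
    (1 - cdfOf h y) * (1 + w * (y - x)) ≤ 1 - cdfOf h x := by
  have key : w * (1 - cdfOf h y) * (y - x) ≤ cdfOf h y - cdfOf h x := by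
    rw [cdf_diff hh hxy]
    refine integral_const_le hh hxy fun t ht => ?_
    have h1 : 1/2 ≤ cdfOf h t := le_trans half (cdf_mono hh (le_trans hax ht.1.le))
    have h2 : min (cdfOf h t) (1 - cdfOf h t) = 1 - cdfOf h t :=
      min_eq_right (by linarith)
    have h3 : cdfOf h t ≤ cdfOf h y := cdf_mono hh ht.2
    have := hlow t
    rw [h2] at this
    nlinarith
  nlinarith [key]

lemma step_down (hh : IsProbDensity h) (hw : 0 < w)
    (hlow : ∀ x : ℝ, w * min (cdfOf h x) (1 - cdfOf h x) ≤ h x)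
    {a x y : ℝ} (half : cdfOf h a ≤ 1/2) (hya : y ≤ a) (hxy : x ≤ y) :
    cdfOf h x * (1 + w * (y - x)) ≤ cdfOf h y := by
  have key : w * cdfOf h x * (y - x) ≤ cdfOf h y - cdfOf h x := by
    rw [cdf_diff hh hxy]
    refine integral_const_le hh hxy fun t ht => ?_
    have h1 : cdfOf h t ≤ 1/2 := le_trans (cdf_mono hh (le_trans ht.2 hya)) half
    have h2 : min (cdfOf h t) (1 - cdfOf h t) = cdfOf h t :=
      min_eq_left (by linarith)
    have h3 : cdfOf h x ≤ cdfOf h t := cdf_mono hh ht.1.le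
    have := hlow t
    rw [h2] at this
    nlinarith
  nlinarith [key]

lemma iter_up (hh : IsProbDensity h) (hw : 0 < w)
    (hlow : ∀ x : ℝ, w * min (cdfOf h x) (1 - cdfOf h x) ≤ h x)
    {a d : ℝ} (half : 1/2 ≤ cdfOf h a) (hd : 0 ≤ d) (n : ℕ) :
    (1 - cdfOf h (a + n * d)) * (1 + w * d) ^ n ≤ 1 - cdfOf h a := by
  induction n with
  | zero => simp
  | succ n ih =>
    have hx : a ≤ a + n * d := le_add_of_nonneg_right (by positivity)
    have hxy : a + (n : ℝ) * d ≤ a + ((n : ℕ) + 1 : ℕ) * d := by push_cast; nlinarith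
    have hstep := step_up hh hw hlow half hx hxy
    have hdd : (a + (((n : ℕ) + 1 : ℕ) : ℝ) * d) - (a + (n : ℝ) * d) = d := by
      push_cast; ring
    rw [hdd] at hstep
    have hpow : (0:ℝ) ≤ (1 + w * d) ^ n := by positivity
    calc (1 - cdfOf h (a + (((n : ℕ) + 1 : ℕ) : ℝ) * d)) * (1 + w * d) ^ (n + 1)
        = ((1 - cdfOf h (a + (((n : ℕ) + 1 : ℕ) : ℝ) * d)) * (1 + w * d)) * (1 + w * d) ^ n := by
          ring
      _ ≤ (1 - cdfOf h (a + (n : ℝ) * d)) * (1 + w * d) ^ n :=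
          mul_le_mul_of_nonneg_right hstep hpow
      _ ≤ 1 - cdfOf h a := ih

lemma iter_down (hh : IsProbDensity h) (hw : 0 < w)
    (hlow : ∀ x : ℝ, w * min (cdfOf h x) (1 - cdfOf h x) ≤ h x)
    {a d : ℝ} (half : cdfOf h a ≤ 1/2) (hd : 0 ≤ d) (n : ℕ) :
    cdfOf h (a - n * d) * (1 + w * d) ^ n ≤ cdfOf h a := by
  induction n with
  | zero => simp
  | succ n ih =>
    have hy : a - (n : ℝ) * d ≤ a := by nlinarith [Nat.cast_nonneg (α := ℝ) n]
    have hxy : a - (((n : ℕ) + 1 : ℕ) : ℝ) * d ≤ a - (n : ℝ) * d := by push_cast; nlinarith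
    have hstep := step_down hh hw hlow half hy hxy
    have hdd : (a - (n : ℝ) * d) - (a - (((n : ℕ) + 1 : ℕ) : ℝ) * d) = d := by
      push_cast; ring
    rw [hdd] at hstep
    have hpow : (0:ℝ) ≤ (1 + w * d) ^ n := by positivity
    calc cdfOf h (a - (((n : ℕ) + 1 : ℕ) : ℝ) * d) * (1 + w * d) ^ (n + 1)
        = (cdfOf h (a - (((n : ℕ) + 1 : ℕ) : ℝ) * d) * (1 + w * d)) * (1 + w * d) ^ n := by
          ring
      _ ≤ cdfOf h (a - (n : ℝ) * d) * (1 + w * d) ^ n :=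
          mul_le_mul_of_nonneg_right hstep hpow
      _ ≤ cdfOf h a := ih

lemma decay_up (hh : IsProbDensity h) (hw : 0 < w)
    (hlow : ∀ x : ℝ, w * min (cdfOf h x) (1 - cdfOf h x) ≤ h x)
    {a c : ℝ} (half : 1/2 ≤ cdfOf h a) (hc : 0 ≤ c) :
    (1 - cdfOf h (a + c)) * Real.exp (w * c) ≤ 1 - cdfOf h a := by
  have hn : ∀ᶠ n : ℕ in atTop,
      (1 - cdfOf h (a + c)) * (1 + (w * c) / n) ^ n ≤ 1 - cdfOf h a := by
    filter_upwards [eventually_gt_atTop 0] with n hn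
    have hn' : (n : ℝ) ≠ 0 := Nat.cast_ne_zero.2 hn.ne'
    have h1 : a + (n : ℝ) * (c / n) = a + c := by field_simp
    have h2 : (w * c) / n = w * (c / n) := by ring
    rw [h2, ← h1]
    exact iter_up hh hw hlow half (by positivity) n
  have ht : Tendsto (fun n : ℕ => (1 - cdfOf h (a + c)) * (1 + (w * c) / n) ^ n)
      atTop (nhds ((1 - cdfOf h (a + c)) * Real.exp (w * c))) :=
    tendsto_const_nhds.mul (Real.tendsto_one_add_div_pow_exp (w * c))
  exact le_of_tendsto ht hn

lemma decay_down (hh : IsProbDensity h) (hw : 0 < w)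
    (hlow : ∀ x : ℝ, w * min (cdfOf h x) (1 - cdfOf h x) ≤ h x)
    {a c : ℝ} (half : cdfOf h a ≤ 1/2) (hc : 0 ≤ c) :
    cdfOf h (a - c) * Real.exp (w * c) ≤ cdfOf h a := by
  have hn : ∀ᶠ n : ℕ in atTop,
      cdfOf h (a - c) * (1 + (w * c) / n) ^ n ≤ cdfOf h a := by
    filter_upwards [eventually_gt_atTop 0] with n hn
    have hn' : (n : ℝ) ≠ 0 := Nat.cast_ne_zero.2 hn.ne'
    have h1 : a - (n : ℝ) * (c / n) = a - c := by field_simp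
    have h2 : (w * c) / n = w * (c / n) := by ring
    rw [h2, ← h1]
    exact iter_down hh hw hlow half (by positivity) n
  have ht : Tendsto (fun n : ℕ => cdfOf h (a - c) * (1 + (w * c) / n) ^ n)
      atTop (nhds (cdfOf h (a - c) * Real.exp (w * c))) :=
    tendsto_const_nhds.mul (Real.tendsto_one_add_div_pow_exp (w * c))
  exact le_of_tendsto ht hn

lemma cdf_continuous (hh : IsProbDensity h) : Continuous (cdfOf h) := by
  have : cdfOf h = fun x => cdfOf h 0 + ∫ t in (0:ℝ)..x, h t := by
    funext x
    rw [cdfOf, cdfOf, ← intervalIntegral.integral_Iic_sub_Iic hh.2.1.integrableOn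
      hh.2.1.integrableOn]
    ring
  rw [this]
  exact continuous_const.add (hh.2.1.continuous_primitive 0)

lemma cdf_tendsto_atTop (hh : IsProbDensity h) :
    Tendsto (cdfOf h) atTop (nhds 1) := by
  have := tendsto_setIntegral_of_monotone (μ := volume) (f := h)
    (s := fun x : ℝ => Set.Iic x) (fun _ => measurableSet_Iic)
    (fun a b hab => Set.Iic_subset_Iic.2 hab)
    (by rw [Set.iUnion_Iic]; exact hh.2.1.integrableOn)
  rwa [Set.iUnion_Iic, Measure.restrict_univ, hh.2.2] at this

lemma cdf_tendsto_atBot (hh : IsProbDensity h) :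
    Tendsto (fun x : ℝ => cdfOf h (-x)) atTop (nhds 0) := by
  have hempty : (⋂ x : ℝ, Set.Iic (-x)) = ∅ := by
    ext t
    simp only [Set.mem_iInter, Set.mem_Iic, Set.mem_empty_iff_false, iff_false, not_forall]
    exact ⟨-(t - 1), by push_neg; linarith⟩
  have := tendsto_setIntegral_of_antitone (μ := volume) (f := h)
    (s := fun x : ℝ => Set.Iic (-x)) (fun _ => measurableSet_Iic)
    (fun a b hab => Set.Iic_subset_Iic.2 (by linarith))
    ⟨0, hh.2.1.integrableOn⟩
  rwa [hempty, Measure.restrict_empty, integral_zero_measure] at this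

end QuantileAux

open Set Filter in
/-- **Logarithmic quantile tail bound.**  Let `h` be a probability density on `ℝ` whose
support `{h > 0}` is an interval, with distribution function `H`, and suppose there is
`ω > 0` with `h(x) ≥ ω min(H(x), 1−H(x))` for all `x`.  Then for every `η ∈ (0,1/2)`:
`H⁻¹(1−η) ≤ H⁻¹(1/2) + ω⁻¹ log(1/(2η))` and `H⁻¹(η) ≥ H⁻¹(1/2) − ω⁻¹ log(1/(2η))`. -/
theorem logarithmic_quantile_tail_bound
    (h : ℝ → ℝ) (hh : IsProbDensity h)
    (hsupp : Set.OrdConnected {x : ℝ | 0 < h x})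
    (w : ℝ) (hw : 0 < w)
    (hlow : ∀ x : ℝ, w * min (cdfOf h x) (1 - cdfOf h x) ≤ h x)
    (η : ℝ) (hη0 : 0 < η) (hη : η < 1 / 2) :
    quantile (cdfOf h) (1 - η) ≤
        quantile (cdfOf h) (1 / 2) + w⁻¹ * Real.log (1 / (2 * η)) ∧
      quantile (cdfOf h) (1 / 2) - w⁻¹ * Real.log (1 / (2 * η)) ≤
        quantile (cdfOf h) η := by
  have hmono := cdf_mono hh
  have hcont := cdf_continuous hh
  have h2η : (0:ℝ) < 2 * η := by linarith
  -- the median a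
  set a := quantile (cdfOf h) (1/2) with ha_def
  have hS_ne : {x : ℝ | 1/2 ≤ cdfOf h x}.Nonempty :=
    ((cdf_tendsto_atTop hh).eventually
      (eventually_ge_nhds (by norm_num : (1:ℝ)/2 < 1))).exists
  have hS_bdd : BddBelow {x : ℝ | 1/2 ≤ cdfOf h x} := by
    obtain ⟨x₀, hx₀⟩ := ((cdf_tendsto_atBot hh).eventually
      (eventually_lt_nhds (by norm_num : (0:ℝ) < 1/2))).exists
    refine ⟨-x₀, fun y hy => ?_⟩
    by_contra hlt
    push_neg at hlt
    exact absurd (le_trans hy (hmono hlt.le)) (not_le.2 hx₀)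
  have hS_closed : IsClosed {x : ℝ | 1/2 ≤ cdfOf h x} :=
    IsClosed.preimage hcont isClosed_Ici
  have ha_mem : 1/2 ≤ cdfOf h a := hS_closed.csInf_mem hS_ne hS_bdd
  have ha_le : cdfOf h a ≤ 1/2 := by
    by_contra hgt
    push_neg at hgt
    have hopen : IsOpen {x : ℝ | 1/2 < cdfOf h x} := isOpen_lt continuous_const hcont
    have hev : ∀ᶠ x in nhds a, 1/2 < cdfOf h x := hopen.mem_nhds hgt
    obtain ⟨x, hx1, hx2⟩ :=
      ((hev.filter_mono nhdsWithin_le_nhds).and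
        (eventually_mem_nhdsWithin (s := Set.Iio a))).exists
    have : a ≤ x := csInf_le hS_bdd hx1.le
    exact absurd hx2 (not_lt.2 this)
  have haH : cdfOf h a = 1/2 := le_antisymm ha_le ha_mem
  -- the shift c
  set c := w⁻¹ * Real.log (1 / (2 * η)) with hc_def
  have hL : 0 ≤ Real.log (1 / (2 * η)) :=
    Real.log_nonneg ((one_le_div h2η).2 (by linarith))
  have hc : 0 ≤ c := mul_nonneg (inv_nonneg.2 hw.le) hL
  have hwc : w * c = Real.log (1 / (2 * η)) := by
    rw [hc_def]; field_simp
  have hexp : Real.exp (w * c) = 1 / (2 * η) := by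
    rw [hwc, Real.exp_log (by positivity)]
  constructor
  · -- upper bound
    have hup := decay_up hh hw hlow ha_mem hc
    rw [hexp, haH] at hup
    have key : 1 - η ≤ cdfOf h (a + c) := by
      have h1 := mul_le_mul_of_nonneg_right hup h2η.le
      have h2 : (1 - cdfOf h (a + c)) * (1 / (2 * η)) * (2 * η)
          = 1 - cdfOf h (a + c) := by field_simp
      rw [h2] at h1
      linarith
    have hlb : ∀ y ∈ {x : ℝ | 1 - η ≤ cdfOf h x}, a ≤ y := by
      intro y hy
      by_contra hlt
      push_neg at hlt
      have := hmono hlt.le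
      rw [haH] at this
      have : (1:ℝ) - η ≤ 1/2 := le_trans hy this
      linarith
    exact csInf_le ⟨a, fun y hy => hlb y hy⟩ key
  · -- lower bound
    refine le_csInf ⟨a, by rw [Set.mem_setOf_eq, haH]; linarith⟩ fun y hy => ?_
    rw [Set.mem_setOf_eq] at hy
    by_contra hlt
    push_neg at hlt
    have hcy : 0 ≤ a - y := by linarith
    have hd := decay_down hh hw hlow ha_le hcy
    rw [show a - (a - y) = y from by ring, haH] at hd
    have he : 1 / (2 * η) < Real.exp (w * (a - y)) := by
      rw [← hexp]
      exact Real.exp_lt_exp.2 (by nlinarith)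
    have h1 : η * Real.exp (w * (a - y)) ≤ cdfOf h y * Real.exp (w * (a - y)) :=
      mul_le_mul_of_nonneg_right hy (Real.exp_pos _).le
    have h2 : η * (1 / (2 * η)) < η * Real.exp (w * (a - y)) :=
      mul_lt_mul_of_pos_left he hη0
    have h3 : η * (1 / (2 * η)) = 1/2 := by field_simp
    linarith
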